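/- (Explicit energy barrier for a cubic energy, Proposition III′.) Assume the cubic setting and suppose η₁ < (8/9)η₀. Then (3/2)η₁ < (4/3)η₀, and every q ∈ ℝⁿ with (3/2)η₁ < |q − p| ≤ (4/3)η₀ satisfies H(q) − H(p) ≥ (λ/3)|q − p|²(1 − (3/2)η₁/|q − p|) > 0. -/

import Mathlib

set_option maxHeartbeats 1000000


/-- **Proposition III′ (Explicit energy barrier for a cubic energy).** Let
`H(p+x) = H(p) + T(x,x,x) + B(x,x) + C(x)` with `T` symmetric trilinear, `B` symmetric
bilinear, `C` linear; suppose `B(v,v) ≥ λ > 0`, `2|C(v)| ≤ η₁ B(v,v)` and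
`2|T(v,v,v)| η₀ ≤ B(v,v)` for all unit `v`, with `η₀ > 0`, `η₁ ≥ 0`. If `η₁ < (8/9)η₀`,
then `(3/2)η₁ < (4/3)η₀`, and `H(q) − H(p) ≥ (λ/3)|q−p|²(1 − (3/2)η₁/|q−p|) > 0` whenever
`(3/2)η₁ < |q−p| ≤ (4/3)η₀`. -/
theorem cubic_energy_barrier (n : ℕ) (p : EuclideanSpace ℝ (Fin n))
    (H : EuclideanSpace ℝ (Fin n) → ℝ)
    (T : EuclideanSpace ℝ (Fin n) →ₗ[ℝ] EuclideanSpace ℝ (Fin n) →ₗ[ℝ]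
      EuclideanSpace ℝ (Fin n) →ₗ[ℝ] ℝ)
    (B : EuclideanSpace ℝ (Fin n) →ₗ[ℝ] EuclideanSpace ℝ (Fin n) →ₗ[ℝ] ℝ)
    (C : EuclideanSpace ℝ (Fin n) →ₗ[ℝ] ℝ)
    (hT : ∀ x y z, T x y z = T y x z ∧ T x y z = T x z y)
    (hB : ∀ x y, B x y = B y x)
    (hH : ∀ x, H (p + x) = H p + T x x x + B x x + C x)
    (lam : ℝ) (hlam : 0 < lam)
    (hbv : ∀ v : EuclideanSpace ℝ (Fin n), ‖v‖ = 1 → lam ≤ B v v)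
    (η₀ η₁ : ℝ) (hη₀ : 0 < η₀) (hη₁ : 0 ≤ η₁)
    (hcv : ∀ v : EuclideanSpace ℝ (Fin n), ‖v‖ = 1 → 2 * |C v| ≤ η₁ * B v v)
    (hav : ∀ v : EuclideanSpace ℝ (Fin n), ‖v‖ = 1 → 2 * |T v v v| * η₀ ≤ B v v)
    (hlt : η₁ < (8 / 9) * η₀) :
    (3 / 2) * η₁ < (4 / 3) * η₀ ∧
    ∀ q : EuclideanSpace ℝ (Fin n),
      (3 / 2) * η₁ < ‖q - p‖ → ‖q - p‖ ≤ (4 / 3) * η₀ →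
      (lam / 3) * ‖q - p‖ ^ 2 * (1 - (3 / 2) * η₁ / ‖q - p‖) ≤ H q - H p ∧
      0 < (lam / 3) * ‖q - p‖ ^ 2 * (1 - (3 / 2) * η₁ / ‖q - p‖) := by
  constructor
  · nlinarith
  intro q h1 h2
  set x : EuclideanSpace ℝ (Fin n) := q - p with hx
  have hr : (0:ℝ) < ‖x‖ := lt_of_le_of_lt (by positivity) h1
  set r := ‖x‖ with hrdef
  have hx0 : x ≠ 0 := norm_pos_iff.mp hr
  set v : EuclideanSpace ℝ (Fin n) := r⁻¹ • x with hv
  have hvnorm : ‖v‖ = 1 := by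
    rw [hv, norm_smul, norm_inv, norm_norm, ← hrdef, inv_mul_cancel₀ hr.ne']
  have hxv : x = r • v := by
    rw [hv, smul_smul, mul_inv_cancel₀ hr.ne', one_smul]
  have hq : q = p + x := by rw [hx]; abel
  have hHq : H q - H p = r^3 * T v v v + r^2 * B v v + r * C v := by
    rw [hq, hH x, hxv]
    simp [map_smul, smul_eq_mul]
    ring
  set a := T v v v
  set b := B v v
  set c := C v
  have hb : lam ≤ b := hbv v hvnorm
  have hc : 2 * |c| ≤ η₁ * b := hcv v hvnorm
  have ha : 2 * |a| * η₀ ≤ b := hav v hvnorm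
  clear_value a b c r
  have hca : -|c| ≤ c := neg_abs_le c
  have haa : -|a| ≤ a := neg_abs_le a
  have hfac : 0 < 1 - (3/2) * η₁ / r := by
    rw [sub_pos, div_lt_one hr]; exact h1
  have hkey : (lam / 3) * r ^ 2 * (1 - (3/2) * η₁ / r) = (lam/3) * (r^2 - (3/2)*η₁*r) := by
    field_simp
  have hblam : 0 < b := lt_of_lt_of_le hlam hb
  constructor
  · rw [hHq, hkey]
    -- r³ a ≥ -r³ |a| ≥ -r³ b/(2η₀); r c ≥ -r|c| ≥ -r η₁ b /2
    have h3 : r^3 * a ≥ -(r^3 * |a|) := by nlinarith [pow_pos hr 3]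
    have h4 : r * c ≥ -(r * |c|) := by nlinarith
    have h5 : r^3 * (2 * |a| * η₀) ≤ r^3 * b :=
      mul_le_mul_of_nonneg_left ha (le_of_lt (pow_pos hr 3))
    have h6 : r * (2 * |c|) ≤ r * (η₁ * b) :=
      mul_le_mul_of_nonneg_left hc (le_of_lt hr)
    -- r ≤ (4/3) η₀ ⇒ r³ ≤ (4/3) η₀ r²  ⇒ r³ b/(2η₀) ≤ (2/3) r² b
    have h7 : r * (r^2 * b) ≤ ((4/3) * η₀) * (r^2 * b) :=
      mul_le_mul_of_nonneg_right h2 (mul_nonneg (sq_nonneg r) hblam.le)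
    have h8 : r^3 * |a| ≤ (2/3) * (r^2 * b) := by nlinarith [hη₀]
    have h9 : r * |c| ≤ (η₁ / 2) * (b * r) := by nlinarith
    have hpos : 0 ≤ r^2 - (3/2) * η₁ * r := by nlinarith
    nlinarith [mul_le_mul_of_nonneg_left hb hpos]
  · positivity
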